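/- Let the edges of the complete 4-partite graph K_2^4 (four parts, each of size 2) be colored with 2 colors. If some vertex x has degree at least 4 in one of the two colors, then the coloring contains a monochromatic cycle C_4. -/

import Mathlib

set_option maxRecDepth 10000
set_option maxHeartbeats 4000000
set_option synthInstance.maxHeartbeats 1000000
set_option synthInstance.maxSize 2000

/-- The complete multipartite graph with `p` parts, each of size `n`:
vertices are pairs `(part, index)`, adjacent iff they lie in different parts. -/
def completeMultipartite (p n : ℕ) : SimpleGraph (Fin p × Fin n) where
  Adj v w := v.1 ≠ w.1
  symm := ⟨fun _ _ h => h.symm⟩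
  loopless := ⟨fun _ h => h rfl⟩

instance (p n : ℕ) : DecidableRel (completeMultipartite p n).Adj :=
  fun v w => inferInstanceAs (Decidable (v.1 ≠ w.1))

/-- The edge coloring `c` contains a monochromatic cycle `C₄` in the graph `G`. -/
def HasMonoC4 {V : Type*} (G : SimpleGraph V) {k : ℕ} (c : Sym2 V → Fin k) : Prop :=
  ∃ v₁ v₂ v₃ v₄ : V,
    v₁ ≠ v₂ ∧ v₁ ≠ v₃ ∧ v₁ ≠ v₄ ∧ v₂ ≠ v₃ ∧ v₂ ≠ v₄ ∧ v₃ ≠ v₄ ∧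
    G.Adj v₁ v₂ ∧ G.Adj v₂ v₃ ∧ G.Adj v₃ v₄ ∧ G.Adj v₄ v₁ ∧
    c s(v₁, v₂) = c s(v₂, v₃) ∧ c s(v₂, v₃) = c s(v₃, v₄) ∧ c s(v₃, v₄) = c s(v₄, v₁)

/-- The `p`-partite Ramsey number `r_p(C₄, k)`: the least positive `n` such that every
`k`-coloring of the edges of `K_n^p` contains a monochromatic `C₄`. -/
noncomputable def multipartiteRamsey (p k : ℕ) : ℕ :=
  sInf {n : ℕ | 0 < n ∧
    ∀ c : Sym2 (Fin p × Fin n) → Fin k, HasMonoC4 (completeMultipartite p n) c}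

/-- The degree of the vertex `x` in color `i` under the edge coloring `c` of `K_2^4`. -/
def colorDegree (c : Sym2 (Fin 4 × Fin 2) → Fin 2) (x : Fin 4 × Fin 2) (i : Fin 2) : ℕ :=
  (Finset.univ.filter fun y => (completeMultipartite 4 2).Adj x y ∧ c s(x, y) = i).card

/-! ### Auxiliary material -/

private lemma fin2_ne_imp : ∀ u v i : Fin 2, u ≠ i → v ≠ i → u = v := by decide

private lemma fin2_three : ∀ p q r : Fin 2, p ≠ q → p ≠ r → q ≠ r → False := by decide

private lemma fin2_succ_ne : ∀ t : Fin 2, t + 1 ≠ t := by decide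

private lemma fin4_exists : ∀ p q r : Fin 4, p ≠ q → p ≠ r → q ≠ r →
    ∃ s, s ≠ p ∧ s ≠ q ∧ s ≠ r := by decide

private lemma fin4_pigeon : ∀ q p1 p2 p3 p4 : Fin 4, p1 ≠ q → p2 ≠ q → p3 ≠ q → p4 ≠ q →
    p1 ≠ p2 → p1 ≠ p3 → p1 ≠ p4 → p2 ≠ p3 → p2 ≠ p4 → p3 ≠ p4 → False := by decide

private lemma four_elems {α : Type*} [DecidableEq α] {s : Finset α} (h : 4 ≤ s.card) :
    ∃ a b cc d, a ∈ s ∧ b ∈ s ∧ cc ∈ s ∧ d ∈ s ∧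
      a ≠ b ∧ a ≠ cc ∧ a ≠ d ∧ b ≠ cc ∧ b ≠ d ∧ cc ≠ d := by
  have c1 : 0 < s.card := by omega
  obtain ⟨a, ha⟩ := Finset.card_pos.mp c1
  have h2 : 3 ≤ (s.erase a).card := by rw [Finset.card_erase_of_mem ha]; omega
  have c2 : 0 < (s.erase a).card := by omega
  obtain ⟨b, hb⟩ := Finset.card_pos.mp c2
  have h3 : 2 ≤ ((s.erase a).erase b).card := by rw [Finset.card_erase_of_mem hb]; omega
  have c3 : 0 < ((s.erase a).erase b).card := by omega
  obtain ⟨cc, hcc⟩ := Finset.card_pos.mp c3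
  have h4 : 1 ≤ (((s.erase a).erase b).erase cc).card := by
    rw [Finset.card_erase_of_mem hcc]; omega
  have c4 : 0 < (((s.erase a).erase b).erase cc).card := by omega
  obtain ⟨d, hd⟩ := Finset.card_pos.mp c4
  obtain ⟨hdc, hdb, hda, hds⟩ :
      d ≠ cc ∧ d ≠ b ∧ d ≠ a ∧ d ∈ s := by
    simp only [Finset.mem_erase] at hd; exact ⟨hd.1, hd.2.1, hd.2.2.1, hd.2.2.2⟩
  obtain ⟨hcb, hca, hcs⟩ : cc ≠ b ∧ cc ≠ a ∧ cc ∈ s := by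
    simp only [Finset.mem_erase] at hcc; exact ⟨hcc.1, hcc.2.1, hcc.2.2⟩
  obtain ⟨hba, hbs⟩ : b ≠ a ∧ b ∈ s := by
    simp only [Finset.mem_erase] at hb; exact ⟨hb.1, hb.2⟩
  exact ⟨a, b, cc, d, ha, hbs, hcs, hds, hba.symm, hca.symm, hda.symm, hcb.symm,
    hdb.symm, hdc.symm⟩

private def PairOK (mS mT : Option (Fin 4)) (AS AT : Fin 4 → Bool) : Prop :=
  ∃ y z : Fin 4, y ≠ z ∧ AS y = true ∧ AS z = true ∧ AT y = true ∧ AT z = true ∧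
    mS ≠ some y ∧ mS ≠ some z ∧ mT ≠ some y ∧ mT ≠ some z

private instance (mS mT : Option (Fin 4)) (AS AT : Fin 4 → Bool) :
    Decidable (PairOK mS mT AS AT) := by
  unfold PairOK; infer_instance

private def Aall : Fin 4 → Bool := ![true, true, true, true]
private def AdjC : Fin 4 → Bool := ![true, true, false, true]
private def AdjD : Fin 4 → Bool := ![true, true, true, false]

private lemma abs22 : ∀ m0 m1 : Option (Fin 4), PairOK m0 m1 Aall Aall := by decide

private lemma abs211 : ∀ m0 m1 m2 m3 m4 : Option (Fin 4),
    (m1 = some 2 ∨ m2 = some 2 ∨ m3 = some 3 ∨ m4 = some 3) ∨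
    PairOK m0 m1 Aall AdjC ∨ PairOK m0 m2 Aall AdjC ∨ PairOK m0 m3 Aall AdjD ∨
    PairOK m0 m4 Aall AdjD ∨ PairOK m1 m2 AdjC AdjC ∨ PairOK m1 m3 AdjC AdjD ∨
    PairOK m1 m4 AdjC AdjD ∨ PairOK m2 m3 AdjC AdjD ∨ PairOK m2 m4 AdjC AdjD ∨
    PairOK m3 m4 AdjD AdjD := by decide

private lemma ne_of_fst_ne {v w : Fin 4 × Fin 2} (h : v.1 ≠ w.1) : v ≠ w :=
  fun e => h (congrArg Prod.fst e)

private lemma ne_of_snd_ne {v w : Fin 4 × Fin 2} (h : v.2 ≠ w.2) : v ≠ w :=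
  fun e => h (congrArg Prod.snd e)

private lemma chooseMiss (f : Fin 4 → Fin 2) (adjB : Fin 4 → Bool) (i : Fin 2)
    (h : ∀ y z, y ≠ z → adjB y = true → adjB z = true → ¬(f y = i ∧ f z = i)) :
    ∃ m : Option (Fin 4), (∀ y, adjB y = true → m ≠ some y → f y ≠ i) ∧
      (∀ y, m = some y → adjB y = true) := by
  by_cases hex : ∃ y, adjB y = true ∧ f y = i
  · obtain ⟨y0, hy0a, hy0⟩ := hex
    refine ⟨some y0, fun y hy hm hfy => ?_, fun y hy => ?_⟩
    · rcases eq_or_ne y y0 with rfl | hne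
      · exact hm rfl
      · exact h y y0 hne hy hy0a ⟨hfy, hy0⟩
    · cases Option.some.inj hy; exact hy0a
  · exact ⟨none, fun y hy _ hfy => hex ⟨y, hy, hfy⟩, fun y hy => by simp at hy⟩

private lemma main_sub (c : Sym2 (Fin 4 × Fin 2) → Fin 2) (x : Fin 4 × Fin 2) (i : Fin 2)
    (a b cc d : Fin 4 × Fin 2)
    (hab : a ≠ b) (hac : a ≠ cc) (had : a ≠ d) (hbc : b ≠ cc) (hbd : b ≠ d) (hcd : cc ≠ d)
    (hpab : a.1 = b.1)
    (ha : (completeMultipartite 4 2).Adj x a ∧ c s(x, a) = i)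
    (hb : (completeMultipartite 4 2).Adj x b ∧ c s(x, b) = i)
    (hc : (completeMultipartite 4 2).Adj x cc ∧ c s(x, cc) = i)
    (hd : (completeMultipartite 4 2).Adj x d ∧ c s(x, d) = i) :
    HasMonoC4 (completeMultipartite 4 2) c := by
  by_contra hno
  have hxa1 : x.1 ≠ a.1 := ha.1
  have hxb1 : x.1 ≠ b.1 := hb.1
  have hxc1 : x.1 ≠ cc.1 := hc.1
  have hxd1 : x.1 ≠ d.1 := hd.1
  have hsnd : ∀ u w : Fin 4 × Fin 2, u ≠ w → u.1 = w.1 → u.2 ≠ w.2 :=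
    fun u w hne h1 h2 => hne (Prod.ext h1 h2)
  have hca1 : cc.1 ≠ a.1 := by
    intro h
    exact fin2_three a.2 b.2 cc.2 (hsnd a b hab hpab) (hsnd a cc hac h.symm)
      (hsnd b cc hbc (hpab.symm.trans h.symm))
  have hda1 : d.1 ≠ a.1 := by
    intro h
    exact fin2_three a.2 b.2 d.2 (hsnd a b hab hpab) (hsnd a d had h.symm)
      (hsnd b d hbd (hpab.symm.trans h.symm))
  have hcb1 : cc.1 ≠ b.1 := fun h => hca1 (h.trans hpab.symm)
  have hdb1 : d.1 ≠ b.1 := fun h => hda1 (h.trans hpab.symm)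
  -- the rule: no vertex other than x has two edges of color i to {a,b,cc,d}
  have hrule : ∀ w y z : Fin 4 × Fin 2, w ≠ x → y ≠ z →
      (completeMultipartite 4 2).Adj x y → (completeMultipartite 4 2).Adj x z →
      (completeMultipartite 4 2).Adj w y → (completeMultipartite 4 2).Adj w z →
      c s(x, y) = i → c s(x, z) = i → ¬(c s(w, y) = i ∧ c s(w, z) = i) := by
    rintro w y z hwx hyz hxy hxz hwy hwz hcy hcz ⟨h1, h2⟩
    have e2 : c s(y, w) = i := by rw [Sym2.eq_swap]; exact h1
    have e4 : c s(z, x) = i := by rw [Sym2.eq_swap]; exact hcz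
    exact hno ⟨x, y, w, z, hxy.ne, hwx.symm, hxz.ne, hwy.ne', hyz, hwz.ne,
      hxy, hwy.symm, hwz, hxz.symm, hcy.trans e2.symm, e2.trans h2.symm, h2.trans e4.symm⟩
  -- builder of a C4 in the other color
  have mkJ : ∀ u w s t : Fin 4 × Fin 2, u ≠ w → s ≠ t →
      (completeMultipartite 4 2).Adj s u → (completeMultipartite 4 2).Adj s w →
      (completeMultipartite 4 2).Adj t u → (completeMultipartite 4 2).Adj t w →
      c s(s, u) ≠ i → c s(s, w) ≠ i → c s(t, u) ≠ i → c s(t, w) ≠ i → False := by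
    intro u w s t huw hst hsu hsw htu htw k1 k2 k3 k4
    have q1 : c s(u, s) ≠ i := by rw [Sym2.eq_swap]; exact k1
    have q3 : c s(w, t) ≠ i := by rw [Sym2.eq_swap]; exact k4
    exact hno ⟨u, s, w, t, hsu.ne', huw, htu.ne', hsw.ne, hst, htw.ne',
      hsu.symm, hsw, htw.symm, htu,
      fin2_ne_imp _ _ i q1 k2, fin2_ne_imp _ _ i k2 q3, fin2_ne_imp _ _ i q3 k3⟩
  -- facts about the vector of the four neighbours
  have hvx : ∀ k : Fin 4, (completeMultipartite 4 2).Adj x (![a, b, cc, d] k) ∧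
      c s(x, ![a, b, cc, d] k) = i := by
    intro k
    fin_cases k
    · exact ⟨ha.1, ha.2⟩
    · exact ⟨hb.1, hb.2⟩
    · exact ⟨hc.1, hc.2⟩
    · exact ⟨hd.1, hd.2⟩
  have hvinj : ∀ k l : Fin 4, k ≠ l → ![a, b, cc, d] k ≠ ![a, b, cc, d] l := by
    intro k l hkl
    fin_cases k <;> fin_cases l <;>
      first
        | exact absurd rfl hkl
        | exact hab | exact hac | exact had | exact hbc | exact hbd | exact hcd
        | exact hab.symm | exact hac.symm | exact had.symm | exact hbc.symm
        | exact hbd.symm | exact hcd.symm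
  -- generic finisher given two sources with their adjacency tables and misses
  have run : ∀ (S T : Fin 4 × Fin 2) (AS AT : Fin 4 → Bool) (mS mT : Option (Fin 4)),
      S ≠ T →
      (∀ k, AS k = true → (completeMultipartite 4 2).Adj S (![a, b, cc, d] k)) →
      (∀ k, AT k = true → (completeMultipartite 4 2).Adj T (![a, b, cc, d] k)) →
      (∀ k, AS k = true → mS ≠ some k → c s(S, ![a, b, cc, d] k) ≠ i) →
      (∀ k, AT k = true → mT ≠ some k → c s(T, ![a, b, cc, d] k) ≠ i) →
      PairOK mS mT AS AT → False := by
    rintro S T AS AT mS mT hST hadjS hadjT hmS hmT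
      ⟨y, z, hyz, a1, a2, a3, a4, n1, n2, n3, n4⟩
    exact mkJ (![a, b, cc, d] y) (![a, b, cc, d] z) S T (hvinj y z hyz) hST
      (hadjS y a1) (hadjS z a2) (hadjT y a3) (hadjT z a4)
      (hmS y a1 n1) (hmS z a2 n2) (hmT y a3 n3) (hmT z a4 n4)
  -- helper to build the miss-option for a source adjacent according to a table
  have getm : ∀ (S : Fin 4 × Fin 2) (AS : Fin 4 → Bool), S ≠ x →
      (∀ k, AS k = true → (completeMultipartite 4 2).Adj S (![a, b, cc, d] k)) →
      ∃ m : Option (Fin 4),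
        (∀ k, AS k = true → m ≠ some k → c s(S, ![a, b, cc, d] k) ≠ i) ∧
        (∀ k, m = some k → AS k = true) := by
    intro S AS hSx hadjS
    exact chooseMiss (fun k => c s(S, ![a, b, cc, d] k)) AS i
      (fun y z hyz hy hz => hrule S (![a, b, cc, d] y) (![a, b, cc, d] z) hSx
        (hvinj y z hyz) (hvx y).1 (hvx z).1 (hadjS y hy) (hadjS z hz)
        (hvx y).2 (hvx z).2)
  rcases eq_or_ne cc.1 d.1 with hccd | hccd
  · -- case 2+2 : cc and d are in the same part
    obtain ⟨rr, hr1, hr2, hr3⟩ := fin4_exists x.1 a.1 cc.1 hxa1 hxc1 hca1.symm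
    have hsadj : ∀ t2 : Fin 2, ∀ k : Fin 4, Aall k = true →
        (completeMultipartite 4 2).Adj ((rr, t2)) (![a, b, cc, d] k) := by
      intro t2 k _
      fin_cases k
      · exact hr2
      · show rr ≠ b.1; rw [← hpab]; exact hr2
      · exact hr3
      · show rr ≠ d.1; rw [← hccd]; exact hr3
    have hsx : ∀ t2 : Fin 2, ((rr, t2) : Fin 4 × Fin 2) ≠ x :=
      fun t2 => ne_of_fst_ne hr1
    obtain ⟨m0, hm0, _⟩ := getm (rr, 0) Aall (hsx 0) (hsadj 0)
    obtain ⟨m1, hm1, _⟩ := getm (rr, 1) Aall (hsx 1) (hsadj 1)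
    exact run (rr, 0) (rr, 1) Aall Aall m0 m1
      (ne_of_snd_ne (show (0 : Fin 2) ≠ 1 by decide))
      (hsadj 0) (hsadj 1) hm0 hm1 (abs22 m0 m1)
  · -- case 2+1+1 : cc and d are in different parts
    have hs0x : ((x.1, x.2 + 1) : Fin 4 × Fin 2) ≠ x :=
      ne_of_snd_ne (fin2_succ_ne x.2)
    have hs2x : ((cc.1, cc.2 + 1) : Fin 4 × Fin 2) ≠ x :=
      ne_of_fst_ne (Ne.symm hxc1)
    have hs4x : ((d.1, d.2 + 1) : Fin 4 × Fin 2) ≠ x :=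
      ne_of_fst_ne (Ne.symm hxd1)
    have hadj0 : ∀ k, Aall k = true →
        (completeMultipartite 4 2).Adj ((x.1, x.2 + 1)) (![a, b, cc, d] k) := by
      intro k _
      fin_cases k
      · exact hxa1
      · exact hxb1
      · exact hxc1
      · exact hxd1
    have hadj1 : ∀ k, AdjC k = true →
        (completeMultipartite 4 2).Adj cc (![a, b, cc, d] k) := by
      intro k hk
      fin_cases k
      · exact hca1
      · exact hcb1
      · exact absurd hk (by decide)
      · exact hccd
    have hadj2 : ∀ k, AdjC k = true →
        (completeMultipartite 4 2).Adj ((cc.1, cc.2 + 1)) (![a, b, cc, d] k) := by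
      intro k hk
      fin_cases k
      · exact hca1
      · exact hcb1
      · exact absurd hk (by decide)
      · exact hccd
    have hadj3 : ∀ k, AdjD k = true →
        (completeMultipartite 4 2).Adj d (![a, b, cc, d] k) := by
      intro k hk
      fin_cases k
      · exact hda1
      · exact hdb1
      · exact hccd.symm
      · exact absurd hk (by decide)
    have hadj4 : ∀ k, AdjD k = true →
        (completeMultipartite 4 2).Adj ((d.1, d.2 + 1)) (![a, b, cc, d] k) := by
      intro k hk
      fin_cases k
      · exact hda1
      · exact hdb1
      · exact hccd.symm
      · exact absurd hk (by decide)
    obtain ⟨m0, hm0, hg0⟩ := getm (x.1, x.2 + 1) Aall hs0x hadj0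
    obtain ⟨m1, hm1, hg1⟩ := getm cc AdjC hc.1.ne' hadj1
    obtain ⟨m2, hm2, hg2⟩ := getm (cc.1, cc.2 + 1) AdjC hs2x hadj2
    obtain ⟨m3, hm3, hg3⟩ := getm d AdjD hd.1.ne' hadj3
    obtain ⟨m4, hm4, hg4⟩ := getm (d.1, d.2 + 1) AdjD hs4x hadj4
    -- distinctness of the sources
    have d01 : ((x.1, x.2 + 1) : Fin 4 × Fin 2) ≠ cc := ne_of_fst_ne hxc1
    have d02 : ((x.1, x.2 + 1) : Fin 4 × Fin 2) ≠ (cc.1, cc.2 + 1) := ne_of_fst_ne hxc1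
    have d03 : ((x.1, x.2 + 1) : Fin 4 × Fin 2) ≠ d := ne_of_fst_ne hxd1
    have d04 : ((x.1, x.2 + 1) : Fin 4 × Fin 2) ≠ (d.1, d.2 + 1) := ne_of_fst_ne hxd1
    have d12 : cc ≠ (cc.1, cc.2 + 1) := ne_of_snd_ne (fin2_succ_ne cc.2).symm
    have d13 : cc ≠ d := hcd
    have d14 : cc ≠ (d.1, d.2 + 1) := ne_of_fst_ne hccd
    have d23 : ((cc.1, cc.2 + 1) : Fin 4 × Fin 2) ≠ d := ne_of_fst_ne hccd
    have d24 : ((cc.1, cc.2 + 1) : Fin 4 × Fin 2) ≠ (d.1, d.2 + 1) := ne_of_fst_ne hccd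
    have d34 : d ≠ (d.1, d.2 + 1) := ne_of_snd_ne (fin2_succ_ne d.2).symm
    rcases abs211 m0 m1 m2 m3 m4 with (g | g | g | g) | h | h | h | h | h | h | h | h | h | h
    · exact absurd (hg1 _ g) (by decide)
    · exact absurd (hg2 _ g) (by decide)
    · exact absurd (hg3 _ g) (by decide)
    · exact absurd (hg4 _ g) (by decide)
    · exact run _ _ _ _ _ _ d01 hadj0 hadj1 hm0 hm1 h
    · exact run _ _ _ _ _ _ d02 hadj0 hadj2 hm0 hm2 h
    · exact run _ _ _ _ _ _ d03 hadj0 hadj3 hm0 hm3 h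
    · exact run _ _ _ _ _ _ d04 hadj0 hadj4 hm0 hm4 h
    · exact run _ _ _ _ _ _ d12 hadj1 hadj2 hm1 hm2 h
    · exact run _ _ _ _ _ _ d13 hadj1 hadj3 hm1 hm3 h
    · exact run _ _ _ _ _ _ d14 hadj1 hadj4 hm1 hm4 h
    · exact run _ _ _ _ _ _ d23 hadj2 hadj3 hm2 hm3 h
    · exact run _ _ _ _ _ _ d24 hadj2 hadj4 hm2 hm4 h
    · exact run _ _ _ _ _ _ d34 hadj3 hadj4 hm3 hm4 h

/-- If in a 2-coloring of the edges of `K_2^4` some vertex has degree at least 4 in one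
of the colors, then the coloring contains a monochromatic `C₄`. -/
theorem hasMonoC4_of_colorDegree_ge_four (c : Sym2 (Fin 4 × Fin 2) → Fin 2)
    (x : Fin 4 × Fin 2) (i : Fin 2) (hx : 4 ≤ colorDegree c x i) :
    HasMonoC4 (completeMultipartite 4 2) c := by
  have hx' : 4 ≤ (Finset.univ.filter fun y =>
      (completeMultipartite 4 2).Adj x y ∧ c s(x, y) = i).card := hx
  obtain ⟨y1, y2, y3, y4, q1, q2, q3, q4, h12, h13, h14, h23, h24, h34⟩ := four_elems hx'
  have p1 := (Finset.mem_filter.mp q1).2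
  have p2 := (Finset.mem_filter.mp q2).2
  have p3 := (Finset.mem_filter.mp q3).2
  have p4 := (Finset.mem_filter.mp q4).2
  by_cases e12 : y1.1 = y2.1
  · exact main_sub c x i y1 y2 y3 y4 h12 h13 h14 h23 h24 h34 e12 p1 p2 p3 p4
  by_cases e13 : y1.1 = y3.1
  · exact main_sub c x i y1 y3 y2 y4 h13 h12 h14 h23.symm h34 h24 e13 p1 p3 p2 p4
  by_cases e14 : y1.1 = y4.1
  · exact main_sub c x i y1 y4 y2 y3 h14 h12 h13 h24.symm h34.symm h23 e14 p1 p4 p2 p3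
  by_cases e23 : y2.1 = y3.1
  · exact main_sub c x i y2 y3 y1 y4 h23 h12.symm h24 h13.symm h34 h14 e23 p2 p3 p1 p4
  by_cases e24 : y2.1 = y4.1
  · exact main_sub c x i y2 y4 y1 y3 h24 h12.symm h23 h14.symm h34.symm h13 e24 p2 p4 p1 p3
  by_cases e34 : y3.1 = y4.1
  · exact main_sub c x i y3 y4 y1 y2 h34 h13.symm h23.symm h14.symm h24.symm h12 e34 p3 p4 p1 p2
  exact (fin4_pigeon x.1 y1.1 y2.1 y3.1 y4.1
    (Ne.symm p1.1) (Ne.symm p2.1) (Ne.symm p3.1) (Ne.symm p4.1)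
    e12 e13 e14 e23 e24 e34).elim
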